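/- Let R satisfy (H1), a, b ∈ ℝ₊ᵈ with a ≤ b componentwise, and let (y^{(a)}, z^{(a)}) and (y^{(b)}, z^{(b)}) solve SP({a+Σu_n}, R) and SP({b+Σu_n}, R) for the same sequence u_n. Then for all n ≥ 1: Δy_n^{(a)} ≥ Δy_n^{(b)}, z_n^{(a)} ≤ z_n^{(b)}, and 0 ≤ y_n^{(a)} − y_n^{(b)} ≤ R⁻¹(b − a) componentwise. -/
import Mathlib


open Matrix Finset MeasureTheory ProbabilityTheory


section SkorokhodAux

lemma mp_aux {d : ℕ} (Q : Matrix (Fin d) (Fin d) ℝ) (hQ : ∀ i j, 0 ≤ Q i j)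
    (s : ℝ) (hs : ∀ i, ∑ j, Q i j < s) (x y : Fin d → ℝ)
    (hxy : (s • (1 : Matrix (Fin d) (Fin d) ℝ) - Q) *ᵥ x = y) (hy : ∀ i, 0 ≤ y i) :
    ∀ i, 0 ≤ x i := by
  by_contra hc
  push_neg at hc
  obtain ⟨i0, hi0⟩ := hc
  obtain ⟨i, -, hmin⟩ := Finset.exists_min_image Finset.univ x ⟨i0, Finset.mem_univ i0⟩
  have hxi : x i < 0 := lt_of_le_of_lt (hmin i0 (Finset.mem_univ i0)) hi0
  have h1 : s * x i - ∑ j, Q i j * x j = y i := by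
    have := congrFun hxy i
    simpa [Matrix.mulVec, dotProduct, Matrix.sub_apply, Matrix.smul_apply,
      Matrix.one_apply, sub_mul, mul_ite, Finset.sum_sub_distrib, smul_eq_mul,
      ite_mul, Finset.sum_ite_eq, Finset.mem_univ] using this
  have h2 : (∑ j, Q i j) * x i ≤ ∑ j, Q i j * x j := by
    rw [Finset.sum_mul]
    exact Finset.sum_le_sum fun j _ => mul_le_mul_of_nonneg_left (hmin j (Finset.mem_univ j)) (hQ i j)
  have h3 : s * x i < (∑ j, Q i j) * x i := by
    exact (mul_lt_mul_right_of_neg hxi).mpr (hs i)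
  have : s * x i < s * x i := by
    calc s * x i < (∑ j, Q i j) * x i := h3
    _ ≤ ∑ j, Q i j * x j := h2
    _ ≤ s * x i := by nlinarith [hy i, h1]
  exact lt_irrefl _ this

lemma mp_inv {d : ℕ} (Q : Matrix (Fin d) (Fin d) ℝ) (hQ : ∀ i j, 0 ≤ Q i j)
    (s : ℝ) (hs : ∀ i, ∑ j, Q i j < s)
    (hdet : IsUnit (s • (1 : Matrix (Fin d) (Fin d) ℝ) - Q).det) :
    ∀ i j, 0 ≤ ((s • (1 : Matrix (Fin d) (Fin d) ℝ) - Q)⁻¹) i j := by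
  intro i j
  set A := s • (1 : Matrix (Fin d) (Fin d) ℝ) - Q with hA
  have hmul : A * A⁻¹ = 1 := Matrix.mul_nonsing_inv A hdet
  have hxy : A *ᵥ (fun k => A⁻¹ k j) = fun i => (1 : Matrix (Fin d) (Fin d) ℝ) i j := by
    funext i'
    have : (A * A⁻¹) i' j = (1 : Matrix (Fin d) (Fin d) ℝ) i' j := by rw [hmul]
    simpa [Matrix.mulVec, dotProduct, Matrix.mul_apply] using this
  exact mp_aux Q hQ s hs _ _ hxy (fun i' => by by_cases h : i' = j <;> simp [Matrix.one_apply, h]) i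

lemma inv_nonneg_of_dets {d : ℕ} (Q : Matrix (Fin d) (Fin d) ℝ) (hQ : ∀ i j, 0 ≤ Q i j)
    (hdet : ∀ s : ℝ, 1 ≤ s → (s • (1 : Matrix (Fin d) (Fin d) ℝ) - Q).det ≠ 0) :
    ∀ i j, 0 ≤ ((1 - Q)⁻¹ : Matrix (Fin d) (Fin d) ℝ) i j := by
  set M : ℝ → Matrix (Fin d) (Fin d) ℝ := fun s => s • 1 - Q with hM
  have hunit : ∀ s : ℝ, 1 ≤ s → IsUnit (M s).det := fun s hs => isUnit_iff_ne_zero.mpr (hdet s hs)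
  set G : Set ℝ := {s | 1 ≤ s ∧ ∀ t, s ≤ t → ∀ i j, 0 ≤ ((M t)⁻¹) i j} with hG
  have hQsum : (0:ℝ) ≤ ∑ i, ∑ j, Q i j :=
    Finset.sum_nonneg fun i _ => Finset.sum_nonneg fun j _ => hQ i j
  have hrowQ : ∀ i, ∑ j, Q i j ≤ ∑ i, ∑ j, Q i j := fun i =>
    Finset.single_le_sum (fun i _ => Finset.sum_nonneg fun j _ => hQ i j) (Finset.mem_univ i)
  have hbig : ((∑ i, ∑ j, Q i j) + 1) ∈ G := by
    refine ⟨by linarith, fun t ht i j => ?_⟩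
    have h1t : (1:ℝ) ≤ t := by linarith
    exact mp_inv Q hQ t (fun i => by linarith [hrowQ i]) (hunit t h1t) i j
  have hne : G.Nonempty := ⟨_, hbig⟩
  have hbdd : BddBelow G := ⟨1, fun s hs => hs.1⟩
  set c := sInf G with hc
  have hc1 : (1:ℝ) ≤ c := le_csInf hne fun s hs => hs.1
  have hgt : ∀ t, c < t → ∀ i j, 0 ≤ ((M t)⁻¹) i j := by
    intro t ht i j
    obtain ⟨s, hsG, hst⟩ := exists_lt_of_csInf_lt hne ht
    exact hsG.2 t hst.le i j
  have hMc : Continuous M := by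
    apply continuous_matrix
    intro i j
    show Continuous fun t : ℝ => (t • (1 : Matrix (Fin d) (Fin d) ℝ) - Q) i j
    simp only [Matrix.sub_apply, Matrix.smul_apply, smul_eq_mul]
    fun_prop
  have hcontinv : ContinuousAt (fun t => (M t)⁻¹) c := by
    have h1 : ContinuousAt Inv.inv (M c) := by
      apply continuousAt_matrix_inv
      rw [Ring.inverse_eq_inv']
      exact continuousAt_inv₀ (hdet c hc1)
    exact h1.comp hMc.continuousAt
  have hNc : ∀ i j, 0 ≤ ((M c)⁻¹) i j := by
    intro i j
    have hce : ContinuousAt (fun t => ((M t)⁻¹) i j) c :=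
      (continuous_id.matrix_elem i j).continuousAt.comp hcontinv
    have htend : Filter.Tendsto (fun t => ((M t)⁻¹) i j) (nhdsWithin c (Set.Ioi c))
        (nhds (((M c)⁻¹) i j)) := hce.continuousWithinAt
    exact ge_of_tendsto htend
      (Filter.eventually_of_mem self_mem_nhdsWithin fun t ht => hgt t ht i j)
  have hceq : c = 1 := by
    by_contra hne1
    have hclt : 1 < c := lt_of_le_of_ne hc1 (Ne.symm hne1)
    set A := (M c)⁻¹ with hA
    set S := ∑ i, ∑ j, A i j with hS
    have hS0 : (0:ℝ) ≤ S := Finset.sum_nonneg fun i _ => Finset.sum_nonneg fun j _ => hNc i j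
    have hrowA : ∀ i, ∑ j, A i j ≤ S := fun i =>
      Finset.single_le_sum (fun i _ => Finset.sum_nonneg fun j _ => hNc i j) (Finset.mem_univ i)
    set ε := min ((c - 1)/2) (1/(S+1)) with hε
    have hε0 : 0 < ε := lt_min (by linarith) (by positivity)
    have hε1 : ε ≤ (c-1)/2 := min_le_left _ _
    have hε2 : ε * (S+1) ≤ 1 := by
      have := min_le_right ((c - 1)/2) (1/(S+1))
      calc ε * (S+1) ≤ (1/(S+1)) * (S+1) := by nlinarith
      _ = 1 := by field_simp
    have hkey : ∀ u, c - ε ≤ u → u < c → ∀ i j, 0 ≤ ((M u)⁻¹) i j := by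
      intro u hu1 hu2 i j
      set δ := c - u with hδ
      have hδ0 : 0 < δ := by simp only [hδ]; linarith
      have hδε : δ ≤ ε := by simp only [hδ]; linarith
      have hu1' : (1:ℝ) ≤ u := by linarith
      have hmulA : M c * A = 1 := Matrix.mul_nonsing_inv _ (hunit c hc1)
      have hfac : M c * (1 - δ • A) = M u := by
        calc M c * (1 - δ • A) = M c - δ • (M c * A) := by
              rw [Matrix.mul_sub, Matrix.mul_one, Matrix.mul_smul]
        _ = M c - δ • (1 : Matrix (Fin d) (Fin d) ℝ) := by rw [hmulA]
        _ = M u := by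
              have h3 : c - δ = u := by simp only [hδ]; ring
              simp only [hM, ← h3, sub_smul]
              abel
      have hdet2 : (1 - δ • A : Matrix (Fin d) (Fin d) ℝ).det ≠ 0 := by
        intro h0
        refine hdet u hu1' ?_
        show (M u).det = 0
        rw [← hfac, Matrix.det_mul, h0, mul_zero]
      have hrow : ∀ i, ∑ j, (δ • A) i j < 1 := by
        intro i
        have h1 : ∑ j, (δ • A) i j = δ * ∑ j, A i j := by
          simp [Matrix.smul_apply, smul_eq_mul, Finset.mul_sum]
        have hra := hrowA i
        have hrnn : (0:ℝ) ≤ ∑ j, A i j := Finset.sum_nonneg fun j _ => hNc i j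
        rw [h1]
        nlinarith
      have hinv2 : ∀ i j, 0 ≤ ((1 - δ • A : Matrix (Fin d) (Fin d) ℝ)⁻¹) i j := by
        have := mp_inv (δ • A) (fun i j => by
            simp only [Matrix.smul_apply, smul_eq_mul]
            exact mul_nonneg hδ0.le (hNc i j)) 1 (fun i => by simpa using hrow i)
          (by rw [one_smul]; exact isUnit_iff_ne_zero.mpr hdet2)
        simpa [one_smul] using this
      have hMu : (M u)⁻¹ = (1 - δ • A : Matrix (Fin d) (Fin d) ℝ)⁻¹ * A := by
        rw [← hfac, Matrix.mul_inv_rev]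
      rw [hMu, Matrix.mul_apply]
      exact Finset.sum_nonneg fun k _ => mul_nonneg (hinv2 i k) (hNc k j)
    have hmemG : (c - ε) ∈ G := by
      refine ⟨by linarith, fun t ht i j => ?_⟩
      rcases lt_trichotomy t c with h|h|h
      · exact hkey t ht h i j
      · rw [h]; exact hNc i j
      · exact hgt t h i j
    have := csInf_le hbdd hmemG
    linarith
  have : ((1:ℝ) • (1 : Matrix (Fin d) (Fin d) ℝ) - Q) = 1 - Q := by rw [one_smul]
  rw [← this]
  intro i j
  have := hNc i j
  rw [hceq] at this
  exact this

lemma dets_of_spec {d : ℕ} (P : Matrix (Fin d) (Fin d) ℝ) (hspec : spectralRadius ℝ P < 1) :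
    ∀ s : ℝ, 1 ≤ s → (s • (1 : Matrix (Fin d) (Fin d) ℝ) - Pᵀ).det ≠ 0 := by
  intro s hs h0
  have hdP : (s • (1 : Matrix (Fin d) (Fin d) ℝ) - P).det = 0 := by
    have ht : (s • (1 : Matrix (Fin d) (Fin d) ℝ) - P)ᵀ = s • 1 - Pᵀ := by
      rw [Matrix.transpose_sub, Matrix.transpose_smul, Matrix.transpose_one]
    rw [← Matrix.det_transpose, ht, h0]
  have hmem : s ∈ spectrum ℝ P := by
    rw [spectrum.mem_iff]
    intro hu
    rw [Algebra.algebraMap_eq_smul_one, Matrix.isUnit_iff_isUnit_det, isUnit_iff_ne_zero] at hu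
    exact hu hdP
  have h1 : (1 : ENNReal) ≤ (‖s‖₊ : ENNReal) := by
    have : (1:ℝ) ≤ ‖s‖ := by rw [Real.norm_eq_abs]; exact le_trans hs (le_abs_self s)
    exact_mod_cast this
  have h2 : (‖s‖₊ : ENNReal) ≤ spectralRadius ℝ P :=
    le_iSup₂ (f := fun k (_ : k ∈ spectrum ℝ P) => (‖k‖₊ : ENNReal)) s hmem
  exact absurd (lt_of_le_of_lt (h1.trans h2) hspec) (lt_irrefl _)

lemma mulVec_one_sub_apply {d : ℕ} (Q : Matrix (Fin d) (Fin d) ℝ) (v : Fin d → ℝ) (i : Fin d) :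
    ((1 - Q) *ᵥ v) i = v i - ∑ j, Q i j * v j := by
  simp [Matrix.mulVec, dotProduct, Matrix.sub_apply, Matrix.one_apply, sub_mul,
    ite_mul, Finset.sum_sub_distrib, Finset.sum_ite_eq, Finset.mem_univ]

lemma lemL {d : ℕ} (Q : Matrix (Fin d) (Fin d) ℝ) (hQ : ∀ i j, 0 ≤ Q i j)
    (h : Fin d → ℝ) (hh : ∀ i, 0 < h i) (hQh : ∀ i, (Q *ᵥ h) i < h i)
    (w : Fin d → ℝ) (hw : ∀ i, 0 < w i → ((1 - Q) *ᵥ w) i ≤ 0) : ∀ i, w i ≤ 0 := by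
  by_contra hc
  push_neg at hc
  obtain ⟨i0, hi0⟩ := hc
  obtain ⟨i, -, hmax⟩ := Finset.exists_max_image Finset.univ (fun j => w j / h j)
    ⟨i0, Finset.mem_univ i0⟩
  set t := w i / h i with ht
  have ht0 : 0 < t := lt_of_lt_of_le (div_pos hi0 (hh i0)) (hmax i0 (Finset.mem_univ i0))
  have hwt : ∀ j, w j ≤ t * h j := by
    intro j
    have := hmax j (Finset.mem_univ j)
    rw [div_le_iff₀ (hh j)] at this
    linarith [this]
  have hwi : w i = t * h i := by
    rw [ht, div_mul_cancel₀]
    exact (hh i).ne'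
  have hwipos : 0 < w i := by rw [hwi]; exact mul_pos ht0 (hh i)
  have hle := hw i hwipos
  have hexp : ((1 - Q) *ᵥ w) i = w i - ∑ j, Q i j * w j := by
    simp [Matrix.mulVec, dotProduct, Matrix.sub_apply, Matrix.one_apply, sub_mul,
      ite_mul, Finset.sum_sub_distrib, Finset.sum_ite_eq, Finset.mem_univ]
  have hsum : ∑ j, Q i j * w j ≤ t * ∑ j, Q i j * h j := by
    rw [Finset.mul_sum]
    refine Finset.sum_le_sum fun j _ => ?_
    calc Q i j * w j ≤ Q i j * (t * h j) := mul_le_mul_of_nonneg_left (hwt j) (hQ i j)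
    _ = t * (Q i j * h j) := by ring
  have hQhi : (Q *ᵥ h) i = ∑ j, Q i j * h j := by
    simp [Matrix.mulVec, dotProduct]
  have : w i < w i := by
    calc w i ≤ ∑ j, Q i j * w j := by rw [hexp] at hle; linarith
    _ ≤ t * ∑ j, Q i j * h j := hsum
    _ < t * h i := by
        rw [← hQhi]
        exact mul_lt_mul_of_pos_left (hQh i) ht0
    _ = w i := hwi.symm
  exact lt_irrefl _ this

lemma step_lcp {d : ℕ} (Q : Matrix (Fin d) (Fin d) ℝ) (hQ : ∀ i j, 0 ≤ Q i j)
    (h : Fin d → ℝ) (hh : ∀ i, 0 < h i) (hQh : ∀ i, (Q *ᵥ h) i < h i)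
    (η η' ξ ζ ξ' ζ' : Fin d → ℝ) (hηη : η ≤ η')
    (he : ζ = η + (1 - Q) *ᵥ ξ) (hξ : ∀ i, 0 ≤ ξ i) (hζ : ∀ i, 0 ≤ ζ i) (hcomp : ζ ⬝ᵥ ξ = 0)
    (he' : ζ' = η' + (1 - Q) *ᵥ ξ') (hξ' : ∀ i, 0 ≤ ξ' i) (hζ' : ∀ i, 0 ≤ ζ' i)
    (hcomp' : ζ' ⬝ᵥ ξ' = 0) : ξ' ≤ ξ ∧ ζ ≤ ζ' := by
  have hcp : ∀ i, ζ i * ξ i = 0 := by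
    intro i
    have h0 : ∑ j, ζ j * ξ j = 0 := hcomp
    have := (Finset.sum_eq_zero_iff_of_nonneg
      (fun j _ => mul_nonneg (hζ j) (hξ j))).mp h0 i (Finset.mem_univ i)
    exact this
  have hcp' : ∀ i, ζ' i * ξ' i = 0 := by
    intro i
    exact (Finset.sum_eq_zero_iff_of_nonneg
      (fun j _ => mul_nonneg (hζ' j) (hξ' j))).mp hcomp' i (Finset.mem_univ i)
  have hRξ : ∀ i, ((1 - Q) *ᵥ ξ) i = ζ i - η i := by
    intro i; have := congrFun he i; simp only [Pi.add_apply] at this; linarith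
  have hRξ' : ∀ i, ((1 - Q) *ᵥ ξ') i = ζ' i - η' i := by
    intro i; have := congrFun he' i; simp only [Pi.add_apply] at this; linarith
  have hle : ξ' ≤ ξ := by
    intro i
    have := lemL Q hQ h hh hQh (ξ' - ξ) ?_ i
    · simp only [Pi.sub_apply] at this; linarith
    · intro k hk
      simp only [Pi.sub_apply] at hk
      have hxpos : 0 < ξ' k := lt_of_le_of_lt (hξ k) (by linarith)
      have hz' : ζ' k = 0 := by
        rcases mul_eq_zero.mp (hcp' k) with h0 | h0
        · exact h0
        · exact absurd h0 (ne_of_gt hxpos)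
      have hsub : ((1 - Q) *ᵥ (ξ' - ξ)) k = ((1 - Q) *ᵥ ξ') k - ((1 - Q) *ᵥ ξ) k := by
        rw [Matrix.mulVec_sub]; simp
      rw [hsub, hRξ k, hRξ' k, hz']
      have := hηη k
      have := hζ k
      linarith
  refine ⟨hle, ?_⟩
  intro i
  by_contra hcon
  push_neg at hcon
  have hzpos : 0 < ζ i := lt_of_le_of_lt (hζ' i) hcon
  have hx0 : ξ i = 0 := by
    rcases mul_eq_zero.mp (hcp i) with h0 | h0
    · exact absurd h0 (ne_of_gt hzpos)
    · exact h0
  have hx0' : ξ' i = 0 := le_antisymm (hx0 ▸ hle i) (hξ' i)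
  have h1 := hRξ i
  have h2 := hRξ' i
  rw [mulVec_one_sub_apply] at h1 h2
  have hsum : ∑ j, Q i j * ξ' j ≤ ∑ j, Q i j * ξ j :=
    Finset.sum_le_sum fun j _ => mul_le_mul_of_nonneg_left (hle j) (hQ i j)
  have := hηη i
  rw [hx0] at h1
  rw [hx0'] at h2
  linarith

lemma telescope_sp {d : ℕ} (R : Matrix (Fin d) (Fin d) ℝ) (c : Fin d → ℝ)
    (u y z : ℕ → Fin d → ℝ) (h0y : y 0 = 0) (h0z : z 0 = c)
    (hrec : ∀ n, 1 ≤ n → z n = z (n - 1) + u n + R *ᵥ (y n - y (n - 1))) :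
    ∀ n, z n = c + (∑ ℓ ∈ Finset.range n, u (ℓ + 1)) + R *ᵥ y n := by
  intro n
  induction n with
  | zero => simp [h0y, h0z, Matrix.mulVec_zero]
  | succ n ih =>
    have hr := hrec (n + 1) (Nat.le_add_left 1 n)
    simp only [Nat.add_sub_cancel] at hr
    rw [hr, ih, Finset.sum_range_succ, Matrix.mulVec_sub]
    funext i
    simp only [Pi.add_apply, Pi.sub_apply]
    ring

end SkorokhodAux

noncomputable section

/-- A pair `(ξ, ζ)` solves the linear complementarity problem `LCP(η, M)`. -/
def IsLCPSol {d : ℕ} (M : Matrix (Fin d) (Fin d) ℝ) (η ξ ζ : Fin d → ℝ) : Prop :=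
  ζ = η + M *ᵥ ξ ∧ (∀ i, 0 ≤ ξ i) ∧ (∀ i, 0 ≤ ζ i) ∧ ξ ⬝ᵥ ζ = 0

/-- `(y, z)` solves the Skorokhod problem `SP({a + Σ u_n}, M)` in the orthant. -/
def IsSPSol {d : ℕ} (M : Matrix (Fin d) (Fin d) ℝ) (a : Fin d → ℝ)
    (u y z : ℕ → Fin d → ℝ) : Prop :=
  y 0 = 0 ∧ z 0 = a ∧
  ∀ n, 1 ≤ n →
    z n = z (n - 1) + u n + M *ᵥ (y n - y (n - 1)) ∧
    (∀ i, 0 ≤ z n i) ∧ (∀ i, 0 ≤ y n i - y (n - 1) i) ∧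
    z n ⬝ᵥ (y n - y (n - 1)) = 0

theorem stmt_5 {d : ℕ} (P : Matrix (Fin d) (Fin d) ℝ)
    (hdiag : ∀ i, P i i = 0) (hnonneg : ∀ i j, 0 ≤ P i j)
    (hspec : spectralRadius ℝ P < 1)
    (a b : Fin d → ℝ) (ha : ∀ i, 0 ≤ a i) (hb : ∀ i, 0 ≤ b i) (hab : a ≤ b)
    (u ya za yb zb : ℕ → Fin d → ℝ)
    (hSPa : IsSPSol (1 - Pᵀ) a u ya za)
    (hSPb : IsSPSol (1 - Pᵀ) b u yb zb) :
    ∀ n, 1 ≤ n →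
      (yb n - yb (n - 1) ≤ ya n - ya (n - 1)) ∧
      (za n ≤ zb n) ∧
      (0 ≤ ya n - yb n) ∧ (ya n - yb n ≤ (1 - Pᵀ)⁻¹ *ᵥ (b - a)) := by
  set Q := Pᵀ with hQdef
  have hQ : ∀ i j, 0 ≤ Q i j := fun i j => hnonneg j i
  have hdets : ∀ s : ℝ, 1 ≤ s → (s • (1 : Matrix (Fin d) (Fin d) ℝ) - Q).det ≠ 0 :=
    dets_of_spec P hspec
  have hinv : ∀ i j, 0 ≤ ((1 - Q)⁻¹ : Matrix (Fin d) (Fin d) ℝ) i j :=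
    inv_nonneg_of_dets Q hQ hdets
  have hdet1 : IsUnit (1 - Q : Matrix (Fin d) (Fin d) ℝ).det := by
    have := hdets 1 le_rfl
    rw [one_smul] at this
    exact isUnit_iff_ne_zero.mpr this
  set h : Fin d → ℝ := (1 - Q)⁻¹ *ᵥ (fun _ => 1) with hhdef
  have hRh : (1 - Q) *ᵥ h = fun _ => (1 : ℝ) := by
    rw [hhdef, Matrix.mulVec_mulVec, Matrix.mul_nonsing_inv _ hdet1, Matrix.one_mulVec]
  have hh0 : ∀ i, 0 ≤ h i := by
    intro i
    rw [hhdef]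
    simp only [Matrix.mulVec, dotProduct]
    exact Finset.sum_nonneg fun j _ => mul_nonneg (hinv i j) zero_le_one
  have hQh0 : ∀ i, 0 ≤ (Q *ᵥ h) i := by
    intro i
    simp only [Matrix.mulVec, dotProduct]
    exact Finset.sum_nonneg fun j _ => mul_nonneg (hQ i j) (hh0 j)
  have hkey : ∀ i, h i - (Q *ᵥ h) i = 1 := by
    intro i
    have := congrFun hRh i
    rw [mulVec_one_sub_apply] at this
    simpa [Matrix.mulVec, dotProduct] using this
  have hh : ∀ i, 0 < h i := fun i => by have := hkey i; have := hQh0 i; linarith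
  have hQh : ∀ i, (Q *ᵥ h) i < h i := fun i => by have := hkey i; linarith
  obtain ⟨hya0, hza0, hSa⟩ := hSPa
  obtain ⟨hyb0, hzb0, hSb⟩ := hSPb
  have hstep : ∀ n : ℕ, za n ≤ zb n →
      ((yb (n+1) - yb n ≤ ya (n+1) - ya n) ∧ za (n+1) ≤ zb (n+1)) := by
    intro n hzab
    obtain ⟨hrecA, hzaN, hΔa, hcompA⟩ := hSa (n+1) (Nat.le_add_left 1 n)
    obtain ⟨hrecB, hzbN, hΔb, hcompB⟩ := hSb (n+1) (Nat.le_add_left 1 n)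
    simp only [Nat.add_sub_cancel] at hrecA hrecB hΔa hΔb hcompA hcompB
    exact step_lcp Q hQ h hh hQh (za n + u (n+1)) (zb n + u (n+1))
      (ya (n+1) - ya n) (za (n+1)) (yb (n+1) - yb n) (zb (n+1))
      (fun i => by have := hzab i; simp only [Pi.add_apply]; linarith)
      (by rw [hrecA])
      (fun i => hΔa i) hzaN hcompA
      (by rw [hrecB])
      (fun i => hΔb i) hzbN hcompB
  have hz : ∀ n, za n ≤ zb n := by
    intro n
    induction n with
    | zero => rw [hza0, hzb0]; exact hab
    | succ n ih => exact (hstep n ih).2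
  have hΔ : ∀ n : ℕ, yb (n+1) - yb n ≤ ya (n+1) - ya n := fun n => (hstep n (hz n)).1
  have hy : ∀ n, 0 ≤ ya n - yb n := by
    intro n
    induction n with
    | zero => rw [hya0, hyb0]; simp
    | succ n ih =>
      intro i
      have h1 := ih i
      have h2 := hΔ n i
      simp only [Pi.sub_apply, Pi.zero_apply] at *
      linarith
  have hta := telescope_sp (1 - Q) a u ya za hya0 hza0 (fun n hn => (hSa n hn).1)
  have htb := telescope_sp (1 - Q) b u yb zb hyb0 hzb0 (fun n hn => (hSb n hn).1)
  intro n hn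
  obtain ⟨m, rfl⟩ : ∃ m, n = m + 1 := ⟨n - 1, by omega⟩
  refine ⟨by simpa only [Nat.add_sub_cancel] using hΔ m, hz (m+1), hy (m+1), ?_⟩
  set n := m + 1
  have hw : (b - a) - (1 - Q) *ᵥ (ya n - yb n) = zb n - za n := by
    funext i
    have h1 := congrFun (hta n) i
    have h2 := congrFun (htb n) i
    have h3 : ((1 - Q) *ᵥ (ya n - yb n)) i
        = ((1 - Q) *ᵥ ya n) i - ((1 - Q) *ᵥ yb n) i := by
      rw [Matrix.mulVec_sub]; simp
    simp only [Pi.add_apply, Pi.sub_apply] at h1 h2 h3 ⊢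
    linarith
  have hid : (1 - Q)⁻¹ *ᵥ ((1 - Q) *ᵥ (ya n - yb n)) = ya n - yb n := by
    rw [Matrix.mulVec_mulVec, Matrix.nonsing_inv_mul _ hdet1, Matrix.one_mulVec]
  have hfin : (1 - Q)⁻¹ *ᵥ (b - a) - (ya n - yb n) = (1 - Q)⁻¹ *ᵥ (zb n - za n) := by
    rw [← hw, Matrix.mulVec_sub ((1 - Q)⁻¹) (b - a), hid]
  intro i
  have h4 := congrFun hfin i
  have h5 : 0 ≤ ((1 - Q)⁻¹ *ᵥ (zb n - za n)) i := by
    simp only [Matrix.mulVec, dotProduct]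
    refine Finset.sum_nonneg fun j _ => mul_nonneg (hinv i j) ?_
    have := hz n j
    simp only [Pi.sub_apply]
    linarith
  simp only [Pi.sub_apply] at h4 ⊢
  linarith
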